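/- Let θ, α be nonconstant inner functions and φ ∈ L^∞(𝕋). The asymmetric dual truncated Toeplitz operator D_φ^{θ,α} : K_θ^⊥ → K_α^⊥ is shift invariant: for all f ∈ K_θ^⊥ and g ∈ K_α^⊥ with z·f ∈ K_θ^⊥ and z·g ∈ K_α^⊥, one has ⟨D_φ^{θ,α}(z f), z g⟩ = ⟨D_φ^{θ,α} f, g⟩. -/

import Mathlib

open MeasureTheory Complex ComplexConjugate

noncomputable section

instance : Fact (0 < 2 * Real.pi) := ⟨by positivity⟩

abbrev 𝕋 : Type := AddCircle (2 * Real.pi)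

abbrev m : Measure 𝕋 := AddCircle.haarAddCircle

def e : 𝕋 → ℂ := fun x => fourier 1 x

def Hardy2 : Set (𝕋 → ℂ) :=
  {f | MemLp f 2 m ∧ ∀ n : ℤ, n < 0 → fourierCoeff f n = 0}

def Hardy2neg : Set (𝕋 → ℂ) :=
  {f | MemLp f 2 m ∧ ∀ n : ℤ, 0 ≤ n → fourierCoeff f n = 0}

def thetaH2 (θ : 𝕋 → ℂ) : Set (𝕋 → ℂ) :=
  {g | ∃ h ∈ Hardy2, g =ᵐ[m] fun x => θ x * h x}

def Kmodel (θ : 𝕋 → ℂ) : Set (𝕋 → ℂ) :=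
  {f | f ∈ Hardy2 ∧ ∀ g ∈ thetaH2 θ, ∫ x, f x * conj (g x) ∂m = 0}

def Kperp (θ : 𝕋 → ℂ) : Set (𝕋 → ℂ) :=
  {f | ∃ g ∈ thetaH2 θ, ∃ h ∈ Hardy2neg, f =ᵐ[m] fun x => g x + h x}

def Cfun (θ f : 𝕋 → ℂ) : 𝕋 → ℂ := fun x => θ x * conj (e x) * conj (f x)

def Jfun (f : 𝕋 → ℂ) : 𝕋 → ℂ := fun x => conj (e x) * conj (f x)

def IsInner (θ : 𝕋 → ℂ) : Prop :=
  MemLp θ ⊤ m ∧ (∀ᵐ x ∂m, ‖θ x‖ = 1) ∧ ∀ n : ℤ, n < 0 → fourierCoeff θ n = 0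

def NCInner (θ : 𝕋 → ℂ) : Prop := IsInner θ ∧ ¬∃ c : ℂ, θ =ᵐ[m] fun _ => c

def IsPneg (f g : 𝕋 → ℂ) : Prop :=
  g ∈ Hardy2neg ∧ ∀ n : ℤ, n < 0 → fourierCoeff g n = fourierCoeff f n

def IsPpos (f g : 𝕋 → ℂ) : Prop :=
  g ∈ Hardy2 ∧ ∀ n : ℤ, 0 ≤ n → fourierCoeff g n = fourierCoeff f n

def IsProjOn (S : Set (𝕋 → ℂ)) (f g : 𝕋 → ℂ) : Prop :=
  g ∈ S ∧ ∀ u ∈ S, ∫ x, (f x - g x) * conj (u x) ∂m = 0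

/-- Asymmetric dual truncated Toeplitz operators are shift invariant:
⟨D_φ^{θ,α}(zf), zg⟩ = ⟨D_φ^{θ,α} f, g⟩ whenever zf ∈ K_θ^⊥ and zg ∈ K_α^⊥. -/
lemma memL2_smul {φ f : 𝕋 → ℂ} (hφ : MemLp φ ⊤ m) (hf : MemLp f 2 m) :
    MemLp (fun x => φ x * f x) 2 m := by
  have h : MemLp (φ • f) 2 m := MemLp.smul hf hφ
  exact h.ae_eq (Filter.Eventually.of_forall fun x => rfl)

lemma memL2_Kperp {θ f : 𝕋 → ℂ} (hθ : IsInner θ) (hf : f ∈ Kperp θ) : MemLp f 2 m := by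
  obtain ⟨g, ⟨h', hh', hg⟩, h, hh, hfe⟩ := hf
  have hθh : MemLp (fun x => θ x * h' x) 2 m := memL2_smul hθ.1 hh'.1
  have hgm : MemLp g 2 m := hθh.ae_eq hg.symm
  exact (hgm.add hh.1).ae_eq hfe.symm

lemma memL2_conj {f : 𝕋 → ℂ} (hf : MemLp f 2 m) : MemLp (fun x => conj (f x)) 2 m := by
  refine MemLp.of_le hf (Complex.continuous_conj.comp_aestronglyMeasurable hf.1) ?_
  filter_upwards with x
  simp

lemma int_mul2 {f g : 𝕋 → ℂ} (hf : MemLp f 2 m) (hg : MemLp g 2 m) :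
    Integrable (fun x => f x * g x) m := by
  rw [← memLp_one_iff_integrable]
  have h : (1 : ENNReal) / 1 = 1 / 2 + 1 / 2 := by
    rw [ENNReal.add_halves, one_div_one]
  have hm : MemLp (f • g) 1 m := by
    haveI : ENNReal.HolderTriple 2 2 1 := ⟨by simpa [one_div] using h.symm⟩
    exact hg.smul hf
  exact hm.ae_eq (Filter.Eventually.of_forall fun x => rfl)

lemma e_mul_conj (x : 𝕋) : e x * conj (e x) = 1 := by
  rw [e, ← fourier_neg, ← fourier_add]
  norm_num

theorem stmt10 (θ α φ : 𝕋 → ℂ) (hθ : NCInner θ) (hα : NCInner α) (hφ : MemLp φ ⊤ m)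
    (f g : 𝕋 → ℂ) (hf : f ∈ Kperp θ) (hg : g ∈ Kperp α)
    (hzf : (fun x => e x * f x) ∈ Kperp θ) (hzg : (fun x => e x * g x) ∈ Kperp α)
    (u v : 𝕋 → ℂ)
    (hu : IsProjOn (Kperp α) (fun x => φ x * f x) u)
    (hv : IsProjOn (Kperp α) (fun x => φ x * (e x * f x)) v) :
    ∫ x, v x * conj (e x * g x) ∂m = ∫ x, u x * conj (g x) ∂m := by
  have hf2 : MemLp f 2 m := memL2_Kperp hθ.1 hf
  have hg2 : MemLp g 2 m := memL2_Kperp hα.1 hg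
  have hzf2 : MemLp (fun x => e x * f x) 2 m := memL2_Kperp hθ.1 hzf
  have hzg2 : MemLp (fun x => e x * g x) 2 m := memL2_Kperp hα.1 hzg
  have hu2 : MemLp u 2 m := memL2_Kperp hα.1 hu.1
  have hv2 : MemLp v 2 m := memL2_Kperp hα.1 hv.1
  have hφf : MemLp (fun x => φ x * f x) 2 m := memL2_smul hφ hf2
  have hφzf : MemLp (fun x => φ x * (e x * f x)) 2 m := memL2_smul hφ hzf2
  have h1 : ∫ x, (φ x * (e x * f x) - v x) * conj (e x * g x) ∂m = 0 := hv.2 _ hzg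
  have h2 : ∫ x, (φ x * f x - u x) * conj (g x) ∂m = 0 := hu.2 g hg
  have i1 : Integrable (fun x => φ x * (e x * f x) * conj (e x * g x)) m :=
    int_mul2 hφzf (memL2_conj hzg2)
  have i2 : Integrable (fun x => v x * conj (e x * g x)) m := int_mul2 hv2 (memL2_conj hzg2)
  have i3 : Integrable (fun x => φ x * f x * conj (g x)) m := int_mul2 hφf (memL2_conj hg2)
  have i4 : Integrable (fun x => u x * conj (g x)) m := int_mul2 hu2 (memL2_conj hg2)
  have e1 : ∫ x, v x * conj (e x * g x) ∂m = ∫ x, φ x * (e x * f x) * conj (e x * g x) ∂m := by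
    have hs := MeasureTheory.integral_sub i1 i2
    simp only [sub_mul] at h1
    rw [h1] at hs
    exact (sub_eq_zero.mp hs.symm).symm
  have e2 : ∫ x, u x * conj (g x) ∂m = ∫ x, φ x * f x * conj (g x) ∂m := by
    have hs := MeasureTheory.integral_sub i3 i4
    simp only [sub_mul] at h2
    rw [h2] at hs
    exact (sub_eq_zero.mp hs.symm).symm
  rw [e1, e2]
  congr 1
  funext x
  have he := e_mul_conj x
  simp only [map_mul]
  calc φ x * (e x * f x) * (conj (e x) * conj (g x))
      = φ x * f x * conj (g x) * (e x * conj (e x)) := by ring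
    _ = φ x * f x * conj (g x) := by rw [he, mul_one]
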